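/- Let s ≥ 1 and N ≥ 1 be integers. For each i ∈ {1,…,s}, let (A_{i,j})_{j≥0} and (α_{i,j})_{j≥0} be nonnegative real sequences with 0 < α̲ ≤ α_{i,j} ≤ ᾱ < ∞ for all i, j, let (B_m)_{m≥0} be a nonnegative real sequence, let 0 ≤ β < 1, and for each i let (n_{i,m})_{m≥0} be a nondecreasing sequence of nonnegative integers with n_{i,m+1} ≤ n_{i,m} + N for all m and with n_{i,m} → ∞ as m → ∞. Suppose that for every m ≥ 1 one has ∑_{i=1}^s ∑_{j=n_{i,m}+1}^{n_{i,m+1}} (α_{i,j} A_{i,j}² − α_{i,j−1} β² A_{i,j−1}²) ≤ B_m · ∑_{i=1}^s ∑_{j=n_{i,m−1}+1}^{n_{i,m}} A_{i,j}, and that ∑_{m=1}^∞ B_m < ∞. Then for every i ∈ {1,…,s}, the series ∑_{j=1}^∞ A_{i,j} converges. -/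

import Mathlib

open Finset


private lemma sqrt_add_le' (x y : ℝ) (hx : 0 ≤ x) (hy : 0 ≤ y) :
    Real.sqrt (x + y) ≤ Real.sqrt x + Real.sqrt y := by
  have h : x + y ≤ (Real.sqrt x + Real.sqrt y) ^ 2 := by
    have hx2 := Real.sq_sqrt hx
    have hy2 := Real.sq_sqrt hy
    nlinarith [mul_nonneg (Real.sqrt_nonneg x) (Real.sqrt_nonneg y)]
  calc Real.sqrt (x + y) ≤ Real.sqrt ((Real.sqrt x + Real.sqrt y) ^ 2) := Real.sqrt_le_sqrt h
    _ = Real.sqrt x + Real.sqrt y := Real.sqrt_sq (by positivity)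

private lemma sqrt_sub_lb (x d : ℝ) (hx : 0 < x) (hd0 : 0 ≤ d) (hdx : d ≤ x) :
    d / (2 * Real.sqrt x) ≤ Real.sqrt x - Real.sqrt (x - d) := by
  have hsx : 0 < Real.sqrt x := Real.sqrt_pos.mpr hx
  have hr : 0 ≤ Real.sqrt x - d / (2 * Real.sqrt x) := by
    rw [sub_nonneg, div_le_iff₀ (by positivity)]
    nlinarith [Real.sq_sqrt hx.le]
  have h2 : x - d ≤ (Real.sqrt x - d / (2 * Real.sqrt x)) ^ 2 := by
    have e1 : (Real.sqrt x - d / (2 * Real.sqrt x)) ^ 2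
        = Real.sqrt x ^ 2 - 2 * Real.sqrt x * (d / (2 * Real.sqrt x))
          + (d / (2 * Real.sqrt x)) ^ 2 := by ring
    have e2 : 2 * Real.sqrt x * (d / (2 * Real.sqrt x)) = d := by
      field_simp
    rw [e2, Real.sq_sqrt hx.le] at e1
    nlinarith [sq_nonneg (d / (2 * Real.sqrt x))]
  have h3 : Real.sqrt (x - d) ≤ Real.sqrt x - d / (2 * Real.sqrt x) := by
    calc Real.sqrt (x - d) ≤ Real.sqrt ((Real.sqrt x - d / (2 * Real.sqrt x)) ^ 2) :=
          Real.sqrt_le_sqrt h2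
      _ = _ := Real.sqrt_sq hr
  linarith

private lemma sqrt_add_ub (x δ : ℝ) (hx : 0 < x) (hδ : 0 ≤ δ) :
    Real.sqrt (x + δ) ≤ Real.sqrt x + δ / (2 * Real.sqrt x) := by
  have hsx : 0 < Real.sqrt x := Real.sqrt_pos.mpr hx
  have h2 : x + δ ≤ (Real.sqrt x + δ / (2 * Real.sqrt x)) ^ 2 := by
    have e1 : (Real.sqrt x + δ / (2 * Real.sqrt x)) ^ 2
        = Real.sqrt x ^ 2 + 2 * Real.sqrt x * (δ / (2 * Real.sqrt x))
          + (δ / (2 * Real.sqrt x)) ^ 2 := by ring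
    have e2 : 2 * Real.sqrt x * (δ / (2 * Real.sqrt x)) = δ := by
      field_simp
    rw [e2, Real.sq_sqrt hx.le] at e1
    nlinarith [sq_nonneg (δ / (2 * Real.sqrt x))]
  calc Real.sqrt (x + δ) ≤ Real.sqrt ((Real.sqrt x + δ / (2 * Real.sqrt x)) ^ 2) :=
        Real.sqrt_le_sqrt h2
    _ = _ := Real.sqrt_sq (by positivity)

private lemma sqrt_mul_amgm (Bv P ε : ℝ) (hB : 0 ≤ Bv) (hP : 0 ≤ P) (hε : 0 < ε) :
    Real.sqrt (Bv * P) ≤ ε * P + Bv / (4 * ε) := by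
  have h1 : Real.sqrt (Bv * P) = Real.sqrt Bv * Real.sqrt P := Real.sqrt_mul hB P
  have h4 : (0:ℝ) < 4 * ε := by positivity
  have hkey : 4 * ε * (Real.sqrt Bv * Real.sqrt P) ≤ 4 * ε * (ε * P + Bv / (4 * ε)) := by
    have e : 4 * ε * (ε * P + Bv / (4 * ε)) = 4 * ε * (ε * P) + Bv := by
      field_simp
    rw [e]
    have hb2 : 4 * ε ^ 2 * Real.sqrt P ^ 2 = 4 * ε ^ 2 * P := by rw [Real.sq_sqrt hP]
    nlinarith [sq_nonneg (Real.sqrt Bv - 2 * ε * Real.sqrt P), Real.sq_sqrt hB, hb2]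
  rw [h1]
  exact le_of_mul_le_mul_left hkey h4

private lemma sum_range_shift (f : ℕ → ℝ) (M : ℕ) :
    ∑ k ∈ Finset.range M, f (k + 1) = ∑ j ∈ Finset.Ioc 0 M, f j := by
  induction M with
  | zero => simp
  | succ M ih =>
      have h : Finset.Ioc 0 (M + 1) = insert (M + 1) (Finset.Ioc 0 M) := by
        ext x; simp only [Finset.mem_Ioc, Finset.mem_insert]; omega
      rw [Finset.sum_range_succ, ih, h, Finset.sum_insert (by simp)]
      ring

private lemma sum_blocks (g : ℕ → ℝ) (n : ℕ → ℕ) (hmono : Monotone n) (M : ℕ) :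
    ∑ j ∈ Finset.Ioc (n 0) (n M), g j
      = ∑ k ∈ Finset.range M, ∑ j ∈ Finset.Ioc (n k) (n (k + 1)), g j := by
  induction M with
  | zero => simp
  | succ M ih =>
      rw [Finset.sum_range_succ, ← ih,
        Finset.sum_Ioc_consecutive _ (hmono (Nat.zero_le M)) (hmono (Nat.le_succ M))]

private lemma block_identity (a A : ℕ → ℝ) (β : ℝ) (p q : ℕ) (hpq : p ≤ q) :
    ∑ j ∈ Finset.Ioc p q, (a j * A j ^ 2 - a (j - 1) * β ^ 2 * A (j - 1) ^ 2)
      = (1 - β ^ 2) * ∑ j ∈ Finset.Ioc p q, a j * A j ^ 2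
        + β ^ 2 * (a q * A q ^ 2 - a p * A p ^ 2) := by
  have h1 : ∑ j ∈ Finset.Ioc p q, a (j - 1) * A (j - 1) ^ 2
      = ∑ j ∈ Finset.Ico p q, a j * A j ^ 2 := by
    rw [← Finset.Ico_add_one_add_one_eq_Ioc, ← Finset.map_add_right_Ico p q 1, Finset.sum_map]
    simp [addRightEmbedding]
  have hq : ∑ j ∈ Finset.Icc p q, a j * A j ^ 2
      = a q * A q ^ 2 + ∑ j ∈ Finset.Ico p q, a j * A j ^ 2 := by
    rw [← Finset.Ico_insert_right hpq, Finset.sum_insert Finset.right_notMem_Ico]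
  have hp : ∑ j ∈ Finset.Icc p q, a j * A j ^ 2
      = a p * A p ^ 2 + ∑ j ∈ Finset.Ioc p q, a j * A j ^ 2 := by
    rw [← Finset.Ioc_insert_left hpq, Finset.sum_insert Finset.left_notMem_Ioc]
  have h2 : a q * A q ^ 2 + ∑ j ∈ Finset.Ico p q, a j * A j ^ 2
      = a p * A p ^ 2 + ∑ j ∈ Finset.Ioc p q, a j * A j ^ 2 := hq.symm.trans hp
  have h3 : ∑ j ∈ Finset.Ioc p q, (a j * A j ^ 2 - a (j - 1) * β ^ 2 * A (j - 1) ^ 2)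
      = ∑ j ∈ Finset.Ioc p q, a j * A j ^ 2
        - β ^ 2 * ∑ j ∈ Finset.Ioc p q, a (j - 1) * A (j - 1) ^ 2 := by
    rw [Finset.sum_sub_distrib, Finset.mul_sum]
    congr 1
    exact Finset.sum_congr rfl fun j _ => by ring
  rw [h3, h1]
  have h2' : ∑ j ∈ Finset.Ico p q, a j * A j ^ 2
      = ∑ j ∈ Finset.Ioc p q, a j * A j ^ 2 + a p * A p ^ 2 - a q * A q ^ 2 := by linarith
  rw [h2']
  ring



set_option maxHeartbeats 1000000 in
private lemma pot_step {s : ℕ} (ρ b η : ℝ) (hρ0 : 0 ≤ ρ) (hρ1 : ρ < 1) (hb : 0 ≤ b)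
    (hη1 : 1 ≤ η) (hcη : 2 ^ (s + 4) ≤ (1 - ρ) * η)
    (u v : Fin s → ℝ) (hu : ∀ i, 0 ≤ u i) (hv : ∀ i, 0 ≤ v i)
    (S : Finset (Fin s)) (hoff : ∀ i ∉ S, v i = u i)
    (hS : ∑ i ∈ S, v i ≤ ρ * ∑ i ∈ S, u i + b) :
    (∑ T ∈ (univ : Finset (Fin s)).powerset, η ^ T.card * Real.sqrt (∑ i ∈ T, v i))
        + Real.sqrt (∑ i ∈ S, u i)
      ≤ (∑ T ∈ (univ : Finset (Fin s)).powerset, η ^ T.card * Real.sqrt (∑ i ∈ T, u i))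
        + (2 ^ s * η ^ s + 1) * Real.sqrt (2 / (1 - ρ)) * Real.sqrt b := by
  have h1ρ : (0:ℝ) < 1 - ρ := by linarith
  have hη0 : (0:ℝ) < η := lt_of_lt_of_le one_pos hη1
  have husum : ∀ T : Finset (Fin s), 0 ≤ ∑ i ∈ T, u i :=
    fun T => Finset.sum_nonneg fun i _ => hu i
  have hvsum : ∀ T : Finset (Fin s), 0 ≤ ∑ i ∈ T, v i :=
    fun T => Finset.sum_nonneg fun i _ => hv i
  have humono : ∀ T₁ T₂ : Finset (Fin s), T₁ ⊆ T₂ → ∑ i ∈ T₁, u i ≤ ∑ i ∈ T₂, u i :=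
    fun T₁ T₂ h => Finset.sum_le_sum_of_subset_of_nonneg h fun i _ _ => hu i
  have hvmono : ∀ T₁ T₂ : Finset (Fin s), T₁ ⊆ T₂ → ∑ i ∈ T₁, v i ≤ ∑ i ∈ T₂, v i :=
    fun T₁ T₂ h => Finset.sum_le_sum_of_subset_of_nonneg h fun i _ _ => hv i
  have hdecomp : ∀ T : Finset (Fin s),
      ∑ i ∈ T, v i = ∑ i ∈ T ∩ S, v i + ∑ i ∈ T \ S, u i := by
    intro T
    rw [← Finset.sum_inter_add_sum_sdiff T S v]
    congr 1
    exact Finset.sum_congr rfl fun i hi => hoff i (Finset.mem_sdiff.mp hi).2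
  have hudecomp : ∀ T : Finset (Fin s),
      ∑ i ∈ T, u i = ∑ i ∈ T ∩ S, u i + ∑ i ∈ T \ S, u i :=
    fun T => (Finset.sum_inter_add_sum_sdiff T S u).symm
  have hvTle : ∀ T : Finset (Fin s), ∑ i ∈ T, v i ≤ ∑ i ∈ T, u i + ∑ i ∈ S, v i := by
    intro T
    have h1 : ∑ i ∈ T ∩ S, v i ≤ ∑ i ∈ S, v i := hvmono _ _ Finset.inter_subset_right
    have h2 : 0 ≤ ∑ i ∈ T ∩ S, u i := husum _
    have e1 := hdecomp T; have e2 := hudecomp T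
    linarith
  have hcard : ∀ T : Finset (Fin s), T.card ≤ s := by
    intro T; simpa using Finset.card_le_univ T
  by_cases hble : (1 - ρ) / 2 * (∑ i ∈ S, u i) ≤ b
  · -- Case 1 : b is large
    have huSb : ∑ i ∈ S, u i ≤ 2 / (1 - ρ) * b := by
      rw [div_mul_eq_mul_div, le_div_iff₀ h1ρ]; nlinarith
    have hvSb : ∑ i ∈ S, v i ≤ 2 / (1 - ρ) * b := by
      have hk : (1 - ρ) * (2 / (1 - ρ) * b) = 2 * b := by field_simp
      nlinarith [husum S]
    have hsq : Real.sqrt (∑ i ∈ S, v i) ≤ Real.sqrt (2 / (1 - ρ)) * Real.sqrt b :=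
      (Real.sqrt_le_sqrt hvSb).trans_eq (Real.sqrt_mul (by positivity) b)
    have hsqu : Real.sqrt (∑ i ∈ S, u i) ≤ Real.sqrt (2 / (1 - ρ)) * Real.sqrt b :=
      (Real.sqrt_le_sqrt huSb).trans_eq (Real.sqrt_mul (by positivity) b)
    have hT : ∀ T ∈ (univ : Finset (Fin s)).powerset,
        η ^ T.card * Real.sqrt (∑ i ∈ T, v i)
          ≤ η ^ T.card * Real.sqrt (∑ i ∈ T, u i)
            + η ^ s * (Real.sqrt (2 / (1 - ρ)) * Real.sqrt b) := by
      intro T _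
      have h1 : Real.sqrt (∑ i ∈ T, v i)
          ≤ Real.sqrt (∑ i ∈ T, u i) + Real.sqrt (∑ i ∈ S, v i) :=
        (Real.sqrt_le_sqrt (hvTle T)).trans (sqrt_add_le' _ _ (husum T) (hvsum S))
      have h5 : η ^ T.card * Real.sqrt (∑ i ∈ T, v i)
          ≤ η ^ T.card * Real.sqrt (∑ i ∈ T, u i) + η ^ T.card * Real.sqrt (∑ i ∈ S, v i) := by
        have := mul_le_mul_of_nonneg_left h1 (pow_nonneg hη0.le T.card)
        rw [mul_add] at this; exact this
      have h6 : η ^ T.card * Real.sqrt (∑ i ∈ S, v i)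
          ≤ η ^ s * (Real.sqrt (2 / (1 - ρ)) * Real.sqrt b) := by
        have h7 : η ^ T.card * Real.sqrt (∑ i ∈ S, v i)
            ≤ η ^ s * Real.sqrt (∑ i ∈ S, v i) :=
          mul_le_mul_of_nonneg_right (pow_le_pow_right₀ hη1 (hcard T)) (Real.sqrt_nonneg _)
        exact h7.trans (mul_le_mul_of_nonneg_left hsq (by positivity))
      linarith
    have hsum := Finset.sum_le_sum hT
    rw [Finset.sum_add_distrib, Finset.sum_const] at hsum
    have hcardP : (((univ : Finset (Fin s)).powerset.card) : ℝ) = 2 ^ s := by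
      simp [Finset.card_powerset]
    rw [nsmul_eq_mul, hcardP] at hsum
    nlinarith [hsqu]
  · -- Case 2 : b is small, genuine decrease
    push_neg at hble
    have huS0 : 0 < ∑ i ∈ S, u i := by nlinarith
    have hdge : (1 - ρ) / 2 * (∑ i ∈ S, u i) ≤ ∑ i ∈ S, u i - ∑ i ∈ S, v i := by
      nlinarith
    set d : ℝ := ∑ i ∈ S, u i - ∑ i ∈ S, v i with hd
    have hd0 : 0 < d := lt_of_lt_of_le (by positivity) hdge
    have hdu : d ≤ ∑ i ∈ S, u i := by
      have := hvsum S; rw [hd]; linarith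
    have hvSle : ∑ i ∈ S, v i ≤ ∑ i ∈ S, u i := by
      have h := hd0; rw [hd] at h; linarith
    -- the claim : per T loss bound
    have hclaim : ∀ T : Finset (Fin s),
        Real.sqrt (∑ i ∈ T, v i) - Real.sqrt (∑ i ∈ T, u i)
          ≤ 8 / (1 - ρ) * (Real.sqrt (∑ i ∈ T ∪ S, u i)
              - Real.sqrt ((∑ i ∈ T ∪ S, u i) - d)) := by
      intro T
      have hxuS : ∑ i ∈ S, u i ≤ ∑ i ∈ T ∪ S, u i := humono _ _ Finset.subset_union_right
      set x : ℝ := ∑ i ∈ T ∪ S, u i with hx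
      have hx0 : 0 < x := lt_of_lt_of_le huS0 hxuS
      have hdx : d ≤ x := hdu.trans hxuS
      have hsx : 0 < Real.sqrt x := Real.sqrt_pos.mpr hx0
      have hgain_lb : (1 - ρ) / 2 * (∑ i ∈ S, u i) / (2 * Real.sqrt x)
          ≤ Real.sqrt x - Real.sqrt (x - d) := by
        refine le_trans ?_ (sqrt_sub_lb x d hx0 hd0.le hdx)
        gcongr
      have hfinal : 2 * (∑ i ∈ S, u i) / Real.sqrt x
          ≤ 8 / (1 - ρ) * (Real.sqrt x - Real.sqrt (x - d)) := by
        have heq : 8 / (1 - ρ) * ((1 - ρ) / 2 * (∑ i ∈ S, u i) / (2 * Real.sqrt x))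
            = 2 * (∑ i ∈ S, u i) / Real.sqrt x := by
          field_simp; ring
        calc 2 * (∑ i ∈ S, u i) / Real.sqrt x
            = 8 / (1 - ρ) * ((1 - ρ) / 2 * (∑ i ∈ S, u i) / (2 * Real.sqrt x)) := heq.symm
          _ ≤ 8 / (1 - ρ) * (Real.sqrt x - Real.sqrt (x - d)) := by
              exact mul_le_mul_of_nonneg_left hgain_lb (by positivity)
      by_cases hx2 : x ≤ 2 * ∑ i ∈ S, u i
      · -- small x
        have h1 : Real.sqrt (∑ i ∈ T, v i)
            ≤ Real.sqrt (∑ i ∈ T, u i) + Real.sqrt (∑ i ∈ S, v i) :=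
          (Real.sqrt_le_sqrt (hvTle T)).trans (sqrt_add_le' _ _ (husum T) (hvsum S))
        have h2 : Real.sqrt (∑ i ∈ S, v i) ≤ Real.sqrt (∑ i ∈ S, u i) :=
          Real.sqrt_le_sqrt hvSle
        have h3 : Real.sqrt (∑ i ∈ S, u i) ≤ 2 * (∑ i ∈ S, u i) / Real.sqrt x := by
          have ha : Real.sqrt x ≤ Real.sqrt (2 * ∑ i ∈ S, u i) := Real.sqrt_le_sqrt hx2
          have hb' : Real.sqrt (∑ i ∈ S, u i) ≤ Real.sqrt (2 * ∑ i ∈ S, u i) :=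
            Real.sqrt_le_sqrt (by linarith)
          have hc' : Real.sqrt (2 * ∑ i ∈ S, u i)
              = 2 * (∑ i ∈ S, u i) / Real.sqrt (2 * ∑ i ∈ S, u i) := by
            rw [Real.div_sqrt]
          have hd' : 2 * (∑ i ∈ S, u i) / Real.sqrt (2 * ∑ i ∈ S, u i)
              ≤ 2 * (∑ i ∈ S, u i) / Real.sqrt x := by
            gcongr
          linarith
        linarith
      · -- large x
        push_neg at hx2
        have huTlb : x - ∑ i ∈ S, u i ≤ ∑ i ∈ T, u i := by
          have e : x = ∑ i ∈ T, u i + ∑ i ∈ S \ T, u i := by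
            rw [hx, ← Finset.union_sdiff_self_eq_union, Finset.sum_union Finset.disjoint_sdiff]
          have : ∑ i ∈ S \ T, u i ≤ ∑ i ∈ S, u i := humono _ _ (Finset.sdiff_subset)
          linarith
        have huT0 : 0 < ∑ i ∈ T, u i := by linarith
        have hsxT : 0 < Real.sqrt (∑ i ∈ T, u i) := Real.sqrt_pos.mpr huT0
        have hxS0 : 0 < x - ∑ i ∈ S, u i := by linarith
        have hsxS : 0 < Real.sqrt (x - ∑ i ∈ S, u i) := Real.sqrt_pos.mpr hxS0
        have h1 : Real.sqrt (∑ i ∈ T, v i)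
            ≤ Real.sqrt (∑ i ∈ T, u i)
              + (∑ i ∈ S, v i) / (2 * Real.sqrt (∑ i ∈ T, u i)) :=
          (Real.sqrt_le_sqrt (hvTle T)).trans (sqrt_add_ub _ _ huT0 (hvsum S))
        have h2 : (∑ i ∈ S, v i) / (2 * Real.sqrt (∑ i ∈ T, u i))
            ≤ (∑ i ∈ S, u i) / (2 * Real.sqrt (x - ∑ i ∈ S, u i)) := by
          refine div_le_div₀ (husum S) hvSle (by positivity) ?_
          have := Real.sqrt_le_sqrt huTlb
          linarith
        have h3 : (∑ i ∈ S, u i) / (2 * Real.sqrt (x - ∑ i ∈ S, u i))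
            ≤ 2 * (∑ i ∈ S, u i) / Real.sqrt x := by
          have h16 : Real.sqrt x ≤ 4 * Real.sqrt (x - ∑ i ∈ S, u i) := by
            have e1 : Real.sqrt (16 * (x - ∑ i ∈ S, u i))
                = 4 * Real.sqrt (x - ∑ i ∈ S, u i) := by
              rw [show (16:ℝ) = 4 ^ 2 by norm_num, Real.sqrt_mul (by positivity),
                Real.sqrt_sq (by norm_num : (0:ℝ) ≤ 4)]
            have e2 : Real.sqrt x ≤ Real.sqrt (16 * (x - ∑ i ∈ S, u i)) :=
              Real.sqrt_le_sqrt (by linarith)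
            linarith
          rw [div_le_div_iff₀ (by positivity) hsx]
          nlinarith [Real.sqrt_nonneg (x - ∑ i ∈ S, u i), huS0.le]
        linarith
    -- global bookkeeping
    have hgain0 : ∀ U : Finset (Fin s),
        0 ≤ Real.sqrt (∑ i ∈ U, u i) - Real.sqrt ((∑ i ∈ U, u i) - d) := by
      intro U
      have := Real.sqrt_le_sqrt (show (∑ i ∈ U, u i) - d ≤ ∑ i ∈ U, u i by linarith)
      linarith
    have hFg0 : ∀ U : Finset (Fin s),
        0 ≤ η ^ U.card * (Real.sqrt (∑ i ∈ U, u i) - Real.sqrt ((∑ i ∈ U, u i) - d)) :=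
      fun U => mul_nonneg (by positivity) (hgain0 U)
    -- sum over supersets of S
    have hP1eq : ∀ T ∈ (univ : Finset (Fin s)).powerset.filter (fun T => S ⊆ T),
        η ^ T.card * Real.sqrt (∑ i ∈ T, u i) - η ^ T.card * Real.sqrt (∑ i ∈ T, v i)
          = η ^ T.card * (Real.sqrt (∑ i ∈ T, u i) - Real.sqrt ((∑ i ∈ T, u i) - d)) := by
      intro T hT
      have hST : S ⊆ T := (Finset.mem_filter.mp hT).2
      have hTv : ∑ i ∈ T, v i = (∑ i ∈ T, u i) - d := by
        have e1 := hdecomp T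
        have e2 := hudecomp T
        rw [Finset.inter_eq_right.mpr hST] at e1 e2
        rw [hd]; linarith
      rw [hTv]; ring
    -- bound on the bad part
    have hP2 : ∑ T ∈ (univ : Finset (Fin s)).powerset.filter (fun T => ¬ S ⊆ T),
          (η ^ T.card * Real.sqrt (∑ i ∈ T, v i) - η ^ T.card * Real.sqrt (∑ i ∈ T, u i))
        ≤ (2:ℝ) ^ (s + 3) / ((1 - ρ) * η)
          * ∑ U ∈ (univ : Finset (Fin s)).powerset.filter (fun U => S ⊆ U),
              η ^ U.card * (Real.sqrt (∑ i ∈ U, u i) - Real.sqrt ((∑ i ∈ U, u i) - d)) := by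
      have step1 : ∀ T ∈ (univ : Finset (Fin s)).powerset.filter (fun T => ¬ S ⊆ T),
          η ^ T.card * Real.sqrt (∑ i ∈ T, v i) - η ^ T.card * Real.sqrt (∑ i ∈ T, u i)
            ≤ 8 / ((1 - ρ) * η) * (η ^ (T ∪ S).card
                * (Real.sqrt (∑ i ∈ T ∪ S, u i) - Real.sqrt ((∑ i ∈ T ∪ S, u i) - d))) := by
        intro T hT
        have hTS : ¬ S ⊆ T := (Finset.mem_filter.mp hT).2
        obtain ⟨i, hiS, hiT⟩ := Finset.not_subset.mp hTS
        have hss : T ⊂ T ∪ S :=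
          (Finset.ssubset_iff_of_subset Finset.subset_union_left).mpr
            ⟨i, Finset.mem_union_right T hiS, hiT⟩
        have hcardlt : T.card + 1 ≤ (T ∪ S).card := Finset.card_lt_card hss
        have hpow : η ^ T.card * η ≤ η ^ (T ∪ S).card := by
          rw [← pow_succ]; exact pow_le_pow_right₀ hη1 hcardlt
        have hgTS := hgain0 (T ∪ S)
        have hle1 : η ^ T.card * Real.sqrt (∑ i ∈ T, v i)
            - η ^ T.card * Real.sqrt (∑ i ∈ T, u i)
            ≤ η ^ T.card * (8 / (1 - ρ) * (Real.sqrt (∑ i ∈ T ∪ S, u i)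
                - Real.sqrt ((∑ i ∈ T ∪ S, u i) - d))) := by
          have := mul_le_mul_of_nonneg_left (hclaim T) (pow_nonneg hη0.le T.card)
          rw [mul_sub] at this; exact this
        refine hle1.trans ?_
        have e1 : η ^ T.card * (8 / (1 - ρ) * (Real.sqrt (∑ i ∈ T ∪ S, u i)
              - Real.sqrt ((∑ i ∈ T ∪ S, u i) - d)))
            = 8 / (1 - ρ) * (η ^ T.card
              * (Real.sqrt (∑ i ∈ T ∪ S, u i) - Real.sqrt ((∑ i ∈ T ∪ S, u i) - d))) := by
          ring
        have e2 : 8 / ((1 - ρ) * η) * (η ^ (T ∪ S).card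
              * (Real.sqrt (∑ i ∈ T ∪ S, u i) - Real.sqrt ((∑ i ∈ T ∪ S, u i) - d)))
            = 8 / (1 - ρ) * ((η ^ (T ∪ S).card / η)
              * (Real.sqrt (∑ i ∈ T ∪ S, u i) - Real.sqrt ((∑ i ∈ T ∪ S, u i) - d))) := by
          field_simp
          try ring
        rw [e1, e2]
        have h3 : η ^ T.card ≤ η ^ (T ∪ S).card / η := by
          rw [le_div_iff₀ hη0]; exact hpow
        have h4 := mul_le_mul_of_nonneg_right h3 hgTS
        have h5 := mul_le_mul_of_nonneg_left h4 (by positivity : (0:ℝ) ≤ 8 / (1 - ρ))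
        exact h5
      have step2 := Finset.sum_le_sum step1
      rw [← Finset.mul_sum] at step2
      refine step2.trans ?_
      have step3 : ∑ T ∈ (univ : Finset (Fin s)).powerset.filter (fun T => ¬ S ⊆ T),
            η ^ (T ∪ S).card * (Real.sqrt (∑ i ∈ T ∪ S, u i)
              - Real.sqrt ((∑ i ∈ T ∪ S, u i) - d))
          ≤ ∑ T ∈ (univ : Finset (Fin s)).powerset,
            η ^ (T ∪ S).card * (Real.sqrt (∑ i ∈ T ∪ S, u i)
              - Real.sqrt ((∑ i ∈ T ∪ S, u i) - d)) :=
        Finset.sum_le_sum_of_subset_of_nonneg (Finset.filter_subset _ _)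
          (fun U _ _ => hFg0 (U ∪ S))
      have step4 : ∑ T ∈ (univ : Finset (Fin s)).powerset,
            η ^ (T ∪ S).card * (Real.sqrt (∑ i ∈ T ∪ S, u i)
              - Real.sqrt ((∑ i ∈ T ∪ S, u i) - d))
          = ∑ U ∈ (univ : Finset (Fin s)).powerset,
              ∑ T ∈ (univ : Finset (Fin s)).powerset.filter (fun T => T ∪ S = U),
                η ^ U.card * (Real.sqrt (∑ i ∈ U, u i) - Real.sqrt ((∑ i ∈ U, u i) - d)) :=
        (Finset.sum_fiberwise_of_maps_to' (g := fun T => T ∪ S)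
          (f := fun U => η ^ U.card * (Real.sqrt (∑ i ∈ U, u i)
            - Real.sqrt ((∑ i ∈ U, u i) - d)))
          (fun T _ => Finset.mem_powerset.mpr (Finset.subset_univ _))).symm
      have step5 : ∑ U ∈ (univ : Finset (Fin s)).powerset,
              ∑ T ∈ (univ : Finset (Fin s)).powerset.filter (fun T => T ∪ S = U),
                η ^ U.card * (Real.sqrt (∑ i ∈ U, u i) - Real.sqrt ((∑ i ∈ U, u i) - d))
          = ∑ U ∈ (univ : Finset (Fin s)).powerset.filter (fun U => S ⊆ U),
              ∑ T ∈ (univ : Finset (Fin s)).powerset.filter (fun T => T ∪ S = U),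
                η ^ U.card * (Real.sqrt (∑ i ∈ U, u i) - Real.sqrt ((∑ i ∈ U, u i) - d)) := by
        symm
        refine Finset.sum_subset (Finset.filter_subset _ _) ?_
        intro U hU hUn
        refine Finset.sum_eq_zero fun T hT => ?_
        exfalso
        apply hUn
        refine Finset.mem_filter.mpr ⟨hU, ?_⟩
        have := (Finset.mem_filter.mp hT).2
        rw [← this]
        exact Finset.subset_union_right
      have step6 : ∑ U ∈ (univ : Finset (Fin s)).powerset.filter (fun U => S ⊆ U),
              ∑ T ∈ (univ : Finset (Fin s)).powerset.filter (fun T => T ∪ S = U),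
                η ^ U.card * (Real.sqrt (∑ i ∈ U, u i) - Real.sqrt ((∑ i ∈ U, u i) - d))
          ≤ ∑ U ∈ (univ : Finset (Fin s)).powerset.filter (fun U => S ⊆ U),
              (2:ℝ) ^ s * (η ^ U.card
                * (Real.sqrt (∑ i ∈ U, u i) - Real.sqrt ((∑ i ∈ U, u i) - d))) := by
        refine Finset.sum_le_sum fun U _ => ?_
        rw [Finset.sum_const, nsmul_eq_mul]
        refine mul_le_mul_of_nonneg_right ?_ (hFg0 U)
        have hcle : ((univ : Finset (Fin s)).powerset.filter
            (fun T => T ∪ S = U)).card ≤ (univ : Finset (Fin s)).powerset.card :=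
          Finset.card_filter_le _ _
        have hPcard : ((univ : Finset (Fin s)).powerset.card : ℝ) = 2 ^ s := by
          simp [Finset.card_powerset]
        calc (((univ : Finset (Fin s)).powerset.filter (fun T => T ∪ S = U)).card : ℝ)
            ≤ ((univ : Finset (Fin s)).powerset.card : ℝ) := Nat.cast_le.mpr hcle
          _ = 2 ^ s := hPcard
      rw [← Finset.mul_sum] at step6
      have hcoef : 8 / ((1 - ρ) * η) * ((2:ℝ) ^ s
            * ∑ U ∈ (univ : Finset (Fin s)).powerset.filter (fun U => S ⊆ U),
              η ^ U.card * (Real.sqrt (∑ i ∈ U, u i) - Real.sqrt ((∑ i ∈ U, u i) - d)))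
          = (2:ℝ) ^ (s + 3) / ((1 - ρ) * η)
            * ∑ U ∈ (univ : Finset (Fin s)).powerset.filter (fun U => S ⊆ U),
              η ^ U.card * (Real.sqrt (∑ i ∈ U, u i) - Real.sqrt ((∑ i ∈ U, u i) - d)) := by
        rw [show (2:ℝ) ^ (s + 3) = 2 ^ s * 8 by rw [pow_add]; norm_num]
        field_simp
      calc 8 / ((1 - ρ) * η) * ∑ T ∈ (univ : Finset (Fin s)).powerset.filter
              (fun T => ¬ S ⊆ T),
              η ^ (T ∪ S).card * (Real.sqrt (∑ i ∈ T ∪ S, u i)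
                - Real.sqrt ((∑ i ∈ T ∪ S, u i) - d))
          ≤ 8 / ((1 - ρ) * η) * ((2:ℝ) ^ s
              * ∑ U ∈ (univ : Finset (Fin s)).powerset.filter (fun U => S ⊆ U),
                η ^ U.card * (Real.sqrt (∑ i ∈ U, u i) - Real.sqrt ((∑ i ∈ U, u i) - d))) := by
            refine mul_le_mul_of_nonneg_left ?_ (by positivity)
            calc _ ≤ _ := step3
              _ = _ := step4
              _ = _ := step5
              _ ≤ _ := step6
        _ = _ := hcoef
    -- final assembly of case 2
    have hsumFg0 : 0 ≤ ∑ U ∈ (univ : Finset (Fin s)).powerset.filter (fun U => S ⊆ U),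
        η ^ U.card * (Real.sqrt (∑ i ∈ U, u i) - Real.sqrt ((∑ i ∈ U, u i) - d)) :=
      Finset.sum_nonneg fun U _ => hFg0 U
    have hcoefle : (2:ℝ) ^ (s + 3) / ((1 - ρ) * η) ≤ 1 / 2 := by
      rw [div_le_div_iff₀ (by positivity) (by norm_num)]
      calc (2:ℝ) ^ (s + 3) * 2 = 2 ^ (s + 4) := by ring
        _ ≤ (1 - ρ) * η := hcη
        _ = 1 * ((1 - ρ) * η) := by ring
    have hP2' : ∑ T ∈ (univ : Finset (Fin s)).powerset.filter (fun T => ¬ S ⊆ T),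
          (η ^ T.card * Real.sqrt (∑ i ∈ T, v i) - η ^ T.card * Real.sqrt (∑ i ∈ T, u i))
        ≤ 1 / 2 * ∑ U ∈ (univ : Finset (Fin s)).powerset.filter (fun U => S ⊆ U),
            η ^ U.card * (Real.sqrt (∑ i ∈ U, u i) - Real.sqrt ((∑ i ∈ U, u i) - d)) :=
      hP2.trans (mul_le_mul_of_nonneg_right hcoefle hsumFg0)
    -- lower bound on the S term
    have hSne : S.Nonempty := by
      rcases Finset.eq_empty_or_nonempty S with h | h
      · rw [h] at huS0; simp at huS0
      · exact h
    have hηS : η ≤ η ^ S.card :=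
      le_self_pow₀ hη1 (Finset.card_pos.mpr hSne).ne'
    have hgainS : (1 - ρ) / 4 * Real.sqrt (∑ i ∈ S, u i)
        ≤ Real.sqrt (∑ i ∈ S, u i) - Real.sqrt ((∑ i ∈ S, u i) - d) := by
      refine le_trans ?_ (sqrt_sub_lb (∑ i ∈ S, u i) d huS0 hd0.le hdu)
      rw [le_div_iff₀ (by positivity)]
      have hms : Real.sqrt (∑ i ∈ S, u i) * Real.sqrt (∑ i ∈ S, u i) = ∑ i ∈ S, u i :=
        Real.mul_self_sqrt huS0.le
      nlinarith
    have hFgS : η * ((1 - ρ) / 4 * Real.sqrt (∑ i ∈ S, u i))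
        ≤ η ^ S.card * (Real.sqrt (∑ i ∈ S, u i) - Real.sqrt ((∑ i ∈ S, u i) - d)) :=
      mul_le_mul hηS hgainS (by positivity) (pow_nonneg hη0.le _)
    have h16 : (16:ℝ) ≤ (1 - ρ) * η := by
      refine le_trans ?_ hcη
      calc (16:ℝ) = 2 ^ 4 := by norm_num
        _ ≤ 2 ^ (s + 4) := pow_le_pow_right₀ one_le_two (by omega)
    have hSin : S ∈ (univ : Finset (Fin s)).powerset.filter (fun U => S ⊆ U) :=
      Finset.mem_filter.mpr ⟨Finset.mem_powerset.mpr (Finset.subset_univ S), subset_rfl⟩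
    have hFgSle : η ^ S.card * (Real.sqrt (∑ i ∈ S, u i) - Real.sqrt ((∑ i ∈ S, u i) - d))
        ≤ ∑ U ∈ (univ : Finset (Fin s)).powerset.filter (fun U => S ⊆ U),
            η ^ U.card * (Real.sqrt (∑ i ∈ U, u i) - Real.sqrt ((∑ i ∈ U, u i) - d)) :=
      Finset.single_le_sum (fun U _ => hFg0 U) hSin
    have h4s : 4 * Real.sqrt (∑ i ∈ S, u i)
        ≤ η * ((1 - ρ) / 4 * Real.sqrt (∑ i ∈ S, u i)) := by
      have := mul_le_mul_of_nonneg_right h16 (Real.sqrt_nonneg (∑ i ∈ S, u i))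
      nlinarith [Real.sqrt_nonneg (∑ i ∈ S, u i)]
    -- combine everything
    have hkey : Real.sqrt (∑ i ∈ S, u i)
        ≤ (∑ T ∈ (univ : Finset (Fin s)).powerset, η ^ T.card * Real.sqrt (∑ i ∈ T, u i))
          - ∑ T ∈ (univ : Finset (Fin s)).powerset, η ^ T.card * Real.sqrt (∑ i ∈ T, v i) := by
      have hsub : (∑ T ∈ (univ : Finset (Fin s)).powerset, η ^ T.card
              * Real.sqrt (∑ i ∈ T, u i))
            - ∑ T ∈ (univ : Finset (Fin s)).powerset, η ^ T.card * Real.sqrt (∑ i ∈ T, v i)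
          = ∑ T ∈ (univ : Finset (Fin s)).powerset,
              (η ^ T.card * Real.sqrt (∑ i ∈ T, u i)
                - η ^ T.card * Real.sqrt (∑ i ∈ T, v i)) :=
        (Finset.sum_sub_distrib _ _).symm
      have hpart : ∑ T ∈ (univ : Finset (Fin s)).powerset,
            (η ^ T.card * Real.sqrt (∑ i ∈ T, u i) - η ^ T.card * Real.sqrt (∑ i ∈ T, v i))
          = (∑ T ∈ (univ : Finset (Fin s)).powerset.filter (fun T => S ⊆ T),
              (η ^ T.card * Real.sqrt (∑ i ∈ T, u i)
                - η ^ T.card * Real.sqrt (∑ i ∈ T, v i)))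
            + ∑ T ∈ (univ : Finset (Fin s)).powerset.filter (fun T => ¬ S ⊆ T),
              (η ^ T.card * Real.sqrt (∑ i ∈ T, u i)
                - η ^ T.card * Real.sqrt (∑ i ∈ T, v i)) :=
        (Finset.sum_filter_add_sum_filter_not _ _ _).symm
      have hP1val : ∑ T ∈ (univ : Finset (Fin s)).powerset.filter (fun T => S ⊆ T),
            (η ^ T.card * Real.sqrt (∑ i ∈ T, u i) - η ^ T.card * Real.sqrt (∑ i ∈ T, v i))
          = ∑ T ∈ (univ : Finset (Fin s)).powerset.filter (fun T => S ⊆ T),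
              η ^ T.card * (Real.sqrt (∑ i ∈ T, u i) - Real.sqrt ((∑ i ∈ T, u i) - d)) :=
        Finset.sum_congr rfl hP1eq
      have hP2neg : ∑ T ∈ (univ : Finset (Fin s)).powerset.filter (fun T => ¬ S ⊆ T),
            (η ^ T.card * Real.sqrt (∑ i ∈ T, u i) - η ^ T.card * Real.sqrt (∑ i ∈ T, v i))
          = - ∑ T ∈ (univ : Finset (Fin s)).powerset.filter (fun T => ¬ S ⊆ T),
              (η ^ T.card * Real.sqrt (∑ i ∈ T, v i)
                - η ^ T.card * Real.sqrt (∑ i ∈ T, u i)) := by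
        rw [← Finset.sum_neg_distrib]
        exact Finset.sum_congr rfl fun T _ => by ring
      rw [hsub, hpart, hP1val, hP2neg]
      have hhalf := hP2'
      linarith [hFgSle, hFgS, h4s]
    linarith [hkey, mul_nonneg (mul_nonneg (by positivity : (0:ℝ) ≤ 2 ^ s * η ^ s + 1)
      (Real.sqrt_nonneg (2 / (1 - ρ)))) (Real.sqrt_nonneg b)]



set_option maxHeartbeats 1000000 in
private lemma abstract_bound (s : ℕ) (ρ KK : ℝ) (hρ0 : 0 ≤ ρ) (hρ1 : ρ < 1) (hKK : 0 < KK)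
    (E : ℕ → Fin s → ℝ) (Vb Pb B : ℕ → ℝ) (Sm : ℕ → Finset (Fin s))
    (hE : ∀ m i, 0 ≤ E m i) (hPb : ∀ k, 0 ≤ Pb k) (hB : ∀ m, 0 ≤ B m)
    (hBsum : Summable B)
    (hCS : ∀ k, Pb k ^ 2 ≤ KK * ((1 - ρ) * Vb k))
    (hstar : ∀ k, (1 - ρ) * Vb (k + 1) + ρ * (∑ i ∈ Sm (k + 1), E (k + 2) i)
        ≤ ρ * (∑ i ∈ Sm (k + 1), E (k + 1) i) + B (k + 1) * Pb k)
    (hEV : ∀ k, (∑ i ∈ Sm (k + 1), E (k + 2) i) ≤ Vb (k + 1))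
    (hoff : ∀ k, ∀ i ∉ Sm (k + 1), E (k + 2) i = E (k + 1) i) :
    ∃ C, ∀ M, ∑ k ∈ Finset.range M, Pb k ≤ C := by
  have h1ρ : (0:ℝ) < 1 - ρ := by linarith
  set η : ℝ := 2 ^ (s + 4) / (1 - ρ) with hηdef
  have hη1 : (1:ℝ) ≤ η := by
    rw [hηdef, le_div_iff₀ h1ρ]
    have h2 : (1:ℝ) ≤ 2 ^ (s + 4) := by
      calc (1:ℝ) = 1 ^ (s + 4) := (one_pow _).symm
        _ ≤ 2 ^ (s + 4) := pow_le_pow_left₀ zero_le_one one_le_two _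
    nlinarith
  have hcη : (2:ℝ) ^ (s + 4) ≤ (1 - ρ) * η := by
    rw [hηdef]
    have : (1 - ρ) * (2 ^ (s + 4) / (1 - ρ)) = 2 ^ (s + 4) := by field_simp
    rw [this]
  set C4 : ℝ := (2 ^ s * η ^ s + 1) * Real.sqrt (2 / (1 - ρ)) with hC4def
  have hC40 : 0 ≤ C4 := by
    rw [hC4def]; positivity
  set Φ : ℕ → ℝ := fun m => ∑ T ∈ (univ : Finset (Fin s)).powerset,
      η ^ T.card * Real.sqrt (∑ i ∈ T, E m i) with hΦdef
  have hΦ0 : ∀ m, 0 ≤ Φ m := by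
    intro m
    rw [hΦdef]
    refine Finset.sum_nonneg fun T _ => mul_nonneg (by positivity) (Real.sqrt_nonneg _)
  have hb0 : ∀ k, 0 ≤ B (k + 1) * Pb k := fun k => mul_nonneg (hB _) (hPb _)
  have hEsum0 : ∀ m (T : Finset (Fin s)), 0 ≤ ∑ i ∈ T, E m i :=
    fun m T => Finset.sum_nonneg fun i _ => hE m i
  -- contraction of active endpoint energies
  have hSb : ∀ k, ∑ i ∈ Sm (k + 1), E (k + 2) i
      ≤ ρ * (∑ i ∈ Sm (k + 1), E (k + 1) i) + B (k + 1) * Pb k := by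
    intro k
    have h1 := hstar k
    have h2 := mul_le_mul_of_nonneg_left (hEV k) h1ρ.le
    linarith
  -- potential decrease
  have hpot : ∀ k, Φ (k + 2) + Real.sqrt (∑ i ∈ Sm (k + 1), E (k + 1) i)
      ≤ Φ (k + 1) + C4 * Real.sqrt (B (k + 1) * Pb k) := by
    intro k
    have := pot_step (s := s) ρ (B (k + 1) * Pb k) η hρ0 hρ1 (hb0 k) hη1 hcη
      (E (k + 1)) (E (k + 2)) (hE (k + 1)) (hE (k + 2)) (Sm (k + 1)) (hoff k) (hSb k)
    rw [hΦdef, hC4def]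
    simpa [mul_assoc] using this
  -- step bound on Pb (k+1)
  have hVb' : ∀ k, (1 - ρ) * Vb (k + 1)
      ≤ ρ * (∑ i ∈ Sm (k + 1), E (k + 1) i) + B (k + 1) * Pb k := by
    intro k
    have h1 := hstar k
    have h2 := hEsum0 (k + 2) (Sm (k + 1))
    nlinarith
  have hPrec : ∀ k, Pb (k + 1) ≤ Real.sqrt KK * (Real.sqrt ρ
      * Real.sqrt (∑ i ∈ Sm (k + 1), E (k + 1) i) + Real.sqrt (B (k + 1) * Pb k)) := by
    intro k
    have h1 : Pb (k + 1) ^ 2 ≤ KK * (ρ * (∑ i ∈ Sm (k + 1), E (k + 1) i)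
        + B (k + 1) * Pb k) := by
      refine (hCS (k + 1)).trans ?_
      exact mul_le_mul_of_nonneg_left (hVb' k) hKK.le
    have h2 : Pb (k + 1) = Real.sqrt (Pb (k + 1) ^ 2) := (Real.sqrt_sq (hPb _)).symm
    rw [h2]
    have h3 : Real.sqrt (Pb (k + 1) ^ 2) ≤ Real.sqrt (KK * (ρ
        * (∑ i ∈ Sm (k + 1), E (k + 1) i) + B (k + 1) * Pb k)) := Real.sqrt_le_sqrt h1
    refine h3.trans ?_
    rw [Real.sqrt_mul hKK.le]
    refine mul_le_mul_of_nonneg_left ?_ (Real.sqrt_nonneg KK)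
    refine (sqrt_add_le' _ _ (mul_nonneg hρ0 (hEsum0 _ _)) (hb0 k)).trans ?_
    rw [Real.sqrt_mul hρ0]
  -- main summed inequality
  set D : ℝ := Real.sqrt KK * (C4 + 1) with hDdef
  have hD0 : 0 < D := by
    rw [hDdef]
    have : 0 < Real.sqrt KK := Real.sqrt_pos.mpr hKK
    nlinarith
  set ε : ℝ := 1 / (2 * D) with hεdef
  have hε0 : 0 < ε := by rw [hεdef]; positivity
  set SB : ℝ := ∑' m, B m with hSBdef
  have hSB0 : 0 ≤ SB := by rw [hSBdef]; exact tsum_nonneg hB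
  have hBpart : ∀ M, ∑ k ∈ Finset.range M, B (k + 1) ≤ SB := by
    intro M
    rw [sum_range_shift B M, hSBdef]
    exact hBsum.sum_le_tsum _ (fun i _ => hB i)
  have hsb : ∀ k, Real.sqrt (B (k + 1) * Pb k) ≤ ε * Pb k + B (k + 1) / (4 * ε) :=
    fun k => sqrt_mul_amgm _ _ _ (hB _) (hPb _) hε0
  set C0 : ℝ := Pb 0 + Real.sqrt KK * Φ 1 + D ^ 2 * SB / 2 with hC0def
  have hC00 : 0 ≤ C0 := by
    rw [hC0def]
    have h1 := hPb 0
    have h2 := mul_nonneg (Real.sqrt_nonneg KK) (hΦ0 1)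
    have h3 := mul_nonneg (sq_nonneg D) hSB0
    linarith
  clear_value η C4 Φ D ε SB C0
  have master : ∀ M, ∑ k ∈ Finset.range (M + 1), Pb k
      ≤ C0 + 1 / 2 * ∑ k ∈ Finset.range M, Pb k := by
    intro M
    -- telescoping potential
    have htel : ∑ k ∈ Finset.range M, (Φ (k + 1) - Φ (k + 2)) = Φ 1 - Φ (M + 1) :=
      Finset.sum_range_sub' (fun k => Φ (k + 1)) M
    have hEsqrt : ∑ k ∈ Finset.range M, Real.sqrt (∑ i ∈ Sm (k + 1), E (k + 1) i)
        ≤ Φ 1 + C4 * ∑ k ∈ Finset.range M, Real.sqrt (B (k + 1) * Pb k) := by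
      have h1 : ∀ k ∈ Finset.range M, Real.sqrt (∑ i ∈ Sm (k + 1), E (k + 1) i)
          ≤ (Φ (k + 1) - Φ (k + 2)) + C4 * Real.sqrt (B (k + 1) * Pb k) := by
        intro k _
        have := hpot k
        linarith
      have h2 := Finset.sum_le_sum h1
      rw [Finset.sum_add_distrib, htel, ← Finset.mul_sum] at h2
      have := hΦ0 (M + 1)
      linarith
    have hsqrtb : ∑ k ∈ Finset.range M, Real.sqrt (B (k + 1) * Pb k)
        ≤ ε * ∑ k ∈ Finset.range M, Pb k + SB / (4 * ε) := by
      have h1 := Finset.sum_le_sum (s := Finset.range M)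
        (fun k (_ : k ∈ Finset.range M) => hsb k)
      rw [Finset.sum_add_distrib, ← Finset.mul_sum, ← Finset.sum_div] at h1
      have h2 := hBpart M
      have h3 : (0:ℝ) < 4 * ε := by positivity
      have h4 : (∑ k ∈ Finset.range M, B (k + 1)) / (4 * ε) ≤ SB / (4 * ε) := by
        gcongr
      linarith
    have hsqrtb0 : 0 ≤ ∑ k ∈ Finset.range M, Real.sqrt (B (k + 1) * Pb k) :=
      Finset.sum_nonneg fun k _ => Real.sqrt_nonneg _
    have hPsum : ∑ k ∈ Finset.range M, Pb (k + 1)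
        ≤ Real.sqrt KK * Real.sqrt ρ
            * ∑ k ∈ Finset.range M, Real.sqrt (∑ i ∈ Sm (k + 1), E (k + 1) i)
          + Real.sqrt KK * ∑ k ∈ Finset.range M, Real.sqrt (B (k + 1) * Pb k) := by
      have h1 := Finset.sum_le_sum (fun k (_ : k ∈ Finset.range M) => hPrec k)
      calc ∑ k ∈ Finset.range M, Pb (k + 1) ≤ _ := h1
        _ = Real.sqrt KK * Real.sqrt ρ
              * ∑ k ∈ Finset.range M, Real.sqrt (∑ i ∈ Sm (k + 1), E (k + 1) i)
            + Real.sqrt KK * ∑ k ∈ Finset.range M, Real.sqrt (B (k + 1) * Pb k) := by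
          symm
          rw [Finset.mul_sum, Finset.mul_sum, ← Finset.sum_add_distrib]
          exact Finset.sum_congr rfl fun k _ => by ring
    have hρ1' : Real.sqrt ρ ≤ 1 := by
      rw [show (1:ℝ) = Real.sqrt 1 by rw [Real.sqrt_one]]
      exact Real.sqrt_le_sqrt hρ1.le
    have hKK0 : 0 ≤ Real.sqrt KK := Real.sqrt_nonneg KK
    have hEsqrt0 : 0 ≤ ∑ k ∈ Finset.range M, Real.sqrt (∑ i ∈ Sm (k + 1), E (k + 1) i) :=
      Finset.sum_nonneg fun k _ => Real.sqrt_nonneg _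
    -- combine
    have hcomb : ∑ k ∈ Finset.range M, Pb (k + 1)
        ≤ Real.sqrt KK * Φ 1 + D * (ε * ∑ k ∈ Finset.range M, Pb k + SB / (4 * ε)) := by
      have h5 : Real.sqrt KK * Real.sqrt ρ
            * ∑ k ∈ Finset.range M, Real.sqrt (∑ i ∈ Sm (k + 1), E (k + 1) i)
          ≤ Real.sqrt KK * ∑ k ∈ Finset.range M, Real.sqrt (∑ i ∈ Sm (k + 1), E (k + 1) i) := by
        have : Real.sqrt KK * Real.sqrt ρ ≤ Real.sqrt KK * 1 := by
          exact mul_le_mul_of_nonneg_left hρ1' hKK0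
        nlinarith
      have h6 := mul_le_mul_of_nonneg_left hEsqrt hKK0
      have h7 := mul_le_mul_of_nonneg_left hsqrtb hKK0
      have hsKC4 : 0 ≤ Real.sqrt KK * C4 := mul_nonneg hKK0 hC40
      have hDexp : D = Real.sqrt KK * C4 + Real.sqrt KK := by rw [hDdef]; ring
      have hsqb' : ε * ∑ k ∈ Finset.range M, Pb k + SB / (4 * ε) ≥ 0 := by
        have : 0 ≤ ∑ k ∈ Finset.range M, Pb k := Finset.sum_nonneg fun k _ => hPb k
        positivity
      nlinarith [hPsum, mul_le_mul_of_nonneg_left hsqrtb hsKC4]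
    -- final arithmetic
    have hDε : D * ε = 1 / 2 := by
      rw [hεdef]; field_simp
    have hDS : D * (SB / (4 * ε)) = D ^ 2 * SB / 2 := by
      rw [hεdef]; field_simp; ring
    have hshift : ∑ k ∈ Finset.range (M + 1), Pb k
        = ∑ k ∈ Finset.range M, Pb (k + 1) + Pb 0 := Finset.sum_range_succ' Pb M
    rw [hshift, hC0def]
    have hexp : D * (ε * ∑ k ∈ Finset.range M, Pb k + SB / (4 * ε))
        = 1 / 2 * ∑ k ∈ Finset.range M, Pb k + D ^ 2 * SB / 2 := by
      rw [mul_add, ← mul_assoc, hDε, hDS]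
    linarith [hcomb, hexp]
  -- conclude by induction
  refine ⟨2 * C0, fun M => ?_⟩
  induction M with
  | zero => simpa using by linarith
  | succ M ih =>
      have := master M
      linarith



set_option maxHeartbeats 1000000 in
/-- Lemma 2.2, summability conclusion \eqref{cau-seq}. -/
theorem seq_lemma_summable
    (s N : ℕ) (hs : 1 ≤ s) (hN : 1 ≤ N)
    (A α : Fin s → ℕ → ℝ) (B : ℕ → ℝ) (alow aup β : ℝ)
    (hA : ∀ i j, 0 ≤ A i j) (hB : ∀ m, 0 ≤ B m)
    (halow : 0 < alow) (hbounds : ∀ i j, alow ≤ α i j ∧ α i j ≤ aup)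
    (hβ0 : 0 ≤ β) (hβ1 : β < 1)
    (n : Fin s → ℕ → ℕ) (hmono : ∀ i, Monotone (n i))
    (hstep : ∀ i m, n i (m + 1) ≤ n i m + N)
    (htends : ∀ i, Filter.Tendsto (n i) Filter.atTop Filter.atTop)
    (hcond : ∀ m, 1 ≤ m →
      ∑ i, ∑ j ∈ Ioc (n i m) (n i (m + 1)),
          (α i j * A i j ^ 2 - α i (j - 1) * β ^ 2 * A i (j - 1) ^ 2) ≤
        B m * ∑ i, ∑ j ∈ Ioc (n i (m - 1)) (n i m), A i j)
    (hBsum : Summable B) :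
    ∀ i, Summable (fun j => A i (j + 1)) := by
  have hβ2 : β ^ 2 < 1 := by nlinarith
  have h1ρ : (0:ℝ) < 1 - β ^ 2 := by linarith
  have hα0 : ∀ i j, (0:ℝ) ≤ α i j := fun i j => le_trans halow.le (hbounds i j).1
  have hAA0 : ∀ i j, (0:ℝ) ≤ α i j * A i j ^ 2 :=
    fun i j => mul_nonneg (hα0 i j) (sq_nonneg _)
  have hs0 : (0:ℝ) < (s:ℝ) := by exact_mod_cast hs
  have hN0 : (0:ℝ) < (N:ℝ) := by exact_mod_cast hN
  set KK : ℝ := (s : ℝ) * N / (alow * (1 - β ^ 2)) with hKKdef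
  have hKK0 : 0 < KK := by rw [hKKdef]; positivity
  -- obligations for abstract_bound
  have hE : ∀ m (i : Fin s), 0 ≤ α i (n i m) * A i (n i m) ^ 2 := fun m i => hAA0 i _
  have hPb : ∀ k, 0 ≤ ∑ i, ∑ j ∈ Ioc (n i k) (n i (k + 1)), A i j :=
    fun k => Finset.sum_nonneg fun i _ => Finset.sum_nonneg fun j _ => hA i j
  have hCS : ∀ k, (∑ i, ∑ j ∈ Ioc (n i k) (n i (k + 1)), A i j) ^ 2
      ≤ KK * ((1 - β ^ 2) * ∑ i, ∑ j ∈ Ioc (n i k) (n i (k + 1)), α i j * A i j ^ 2) := by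
    intro k
    have h1 : (∑ i, ∑ j ∈ Ioc (n i k) (n i (k + 1)), A i j) ^ 2
        ≤ (s:ℝ) * ∑ i, (∑ j ∈ Ioc (n i k) (n i (k + 1)), A i j) ^ 2 := by
      have := sq_sum_le_card_mul_sum_sq
        (s := (univ : Finset (Fin s))) (f := fun i => ∑ j ∈ Ioc (n i k) (n i (k + 1)), A i j)
      simpa using this
    have h2 : ∀ i : Fin s, (∑ j ∈ Ioc (n i k) (n i (k + 1)), A i j) ^ 2
        ≤ (N:ℝ) * ∑ j ∈ Ioc (n i k) (n i (k + 1)), A i j ^ 2 := by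
      intro i
      have hcs := sq_sum_le_card_mul_sum_sq
        (s := Finset.Ioc (n i k) (n i (k + 1))) (f := A i)
      have hcard : (((Finset.Ioc (n i k) (n i (k + 1))).card : ℕ) : ℝ) ≤ (N:ℝ) := by
        rw [Nat.card_Ioc]
        have := hstep i k
        exact_mod_cast (by omega : n i (k + 1) - n i k ≤ N)
      have hsq0 : 0 ≤ ∑ j ∈ Ioc (n i k) (n i (k + 1)), A i j ^ 2 :=
        Finset.sum_nonneg fun j _ => sq_nonneg _
      have := mul_le_mul_of_nonneg_right hcard hsq0
      linarith
    have h3 : ∀ i : Fin s, ∑ j ∈ Ioc (n i k) (n i (k + 1)), A i j ^ 2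
        ≤ (1 / alow) * ∑ j ∈ Ioc (n i k) (n i (k + 1)), α i j * A i j ^ 2 := by
      intro i
      rw [Finset.mul_sum]
      refine Finset.sum_le_sum fun j _ => ?_
      have hb := mul_le_mul_of_nonneg_right (hbounds i j).1 (sq_nonneg (A i j))
      rw [show (1:ℝ) / alow * (α i j * A i j ^ 2) = (α i j * A i j ^ 2) / alow by ring,
        le_div_iff₀ halow]
      nlinarith
    have h4 : ∑ i, (∑ j ∈ Ioc (n i k) (n i (k + 1)), A i j) ^ 2
        ≤ ∑ i, (N:ℝ) * ((1 / alow) * ∑ j ∈ Ioc (n i k) (n i (k + 1)), α i j * A i j ^ 2) :=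
      Finset.sum_le_sum fun i _ =>
        (h2 i).trans (mul_le_mul_of_nonneg_left (h3 i) hN0.le)
    have h5 : ∑ i, (N:ℝ) * ((1 / alow) * ∑ j ∈ Ioc (n i k) (n i (k + 1)), α i j * A i j ^ 2)
        = (N:ℝ) * ((1 / alow) * ∑ i, ∑ j ∈ Ioc (n i k) (n i (k + 1)), α i j * A i j ^ 2) := by
      rw [show ((N:ℝ) * ((1 / alow) * ∑ i, ∑ j ∈ Ioc (n i k) (n i (k + 1)), α i j * A i j ^ 2))
          = (N:ℝ) * (1 / alow) * ∑ i, ∑ j ∈ Ioc (n i k) (n i (k + 1)), α i j * A i j ^ 2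
          from by ring]
      rw [Finset.mul_sum (univ : Finset (Fin s))
        (fun i => ∑ j ∈ Ioc (n i k) (n i (k + 1)), α i j * A i j ^ 2) ((N:ℝ) * (1 / alow))]
      exact Finset.sum_congr rfl fun i _ => by ring
    have h6 : KK * ((1 - β ^ 2) * ∑ i, ∑ j ∈ Ioc (n i k) (n i (k + 1)), α i j * A i j ^ 2)
        = (s:ℝ) * ((N:ℝ) * ((1 / alow)
            * ∑ i, ∑ j ∈ Ioc (n i k) (n i (k + 1)), α i j * A i j ^ 2)) := by
      rw [hKKdef]
      field_simp
    rw [h6]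
    have := mul_le_mul_of_nonneg_left (h4.trans_eq h5) hs0.le
    linarith [h1]
  have hoffk : ∀ k, ∀ i ∉ Finset.univ.filter (fun i : Fin s => n i (k + 1) < n i (k + 1 + 1)),
      α i (n i (k + 2)) * A i (n i (k + 2)) ^ 2 = α i (n i (k + 1)) * A i (n i (k + 1)) ^ 2 := by
    intro k i hi
    have hnlt : ¬ (n i (k + 1) < n i (k + 1 + 1)) :=
      fun h => hi (Finset.mem_filter.mpr ⟨Finset.mem_univ i, h⟩)
    have heq : n i (k + 2) = n i (k + 1) :=
      le_antisymm (not_lt.mp hnlt) (hmono i (by omega))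
    rw [heq]
  have hEV : ∀ k, (∑ i ∈ Finset.univ.filter (fun i : Fin s => n i (k + 1) < n i (k + 1 + 1)),
        α i (n i (k + 2)) * A i (n i (k + 2)) ^ 2)
      ≤ ∑ i, ∑ j ∈ Ioc (n i (k + 1)) (n i (k + 1 + 1)), α i j * A i j ^ 2 := by
    intro k
    have hstep1 : ∀ i ∈ Finset.univ.filter (fun i : Fin s => n i (k + 1) < n i (k + 1 + 1)),
        α i (n i (k + 2)) * A i (n i (k + 2)) ^ 2
          ≤ ∑ j ∈ Ioc (n i (k + 1)) (n i (k + 1 + 1)), α i j * A i j ^ 2 := by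
      intro i hi
      exact Finset.single_le_sum (fun j _ => hAA0 i j)
        (Finset.mem_Ioc.mpr ⟨(Finset.mem_filter.mp hi).2, le_refl _⟩)
    refine (Finset.sum_le_sum hstep1).trans ?_
    exact Finset.sum_le_sum_of_subset_of_nonneg (Finset.filter_subset _ _)
      (fun i _ _ => Finset.sum_nonneg fun j _ => hAA0 i j)
  have hstar : ∀ k, (1 - β ^ 2) * (∑ i, ∑ j ∈ Ioc (n i (k + 1)) (n i (k + 1 + 1)),
          α i j * A i j ^ 2)
        + β ^ 2 * (∑ i ∈ Finset.univ.filter (fun i : Fin s => n i (k + 1) < n i (k + 1 + 1)),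
            α i (n i (k + 2)) * A i (n i (k + 2)) ^ 2)
      ≤ β ^ 2 * (∑ i ∈ Finset.univ.filter (fun i : Fin s => n i (k + 1) < n i (k + 1 + 1)),
            α i (n i (k + 1)) * A i (n i (k + 1)) ^ 2)
        + B (k + 1) * ∑ i, ∑ j ∈ Ioc (n i k) (n i (k + 1)), A i j := by
    intro k
    have hc := hcond (k + 1) (by omega)
    simp only [Nat.add_sub_cancel] at hc
    have hid : ∑ i, ∑ j ∈ Ioc (n i (k + 1)) (n i (k + 1 + 1)),
          (α i j * A i j ^ 2 - α i (j - 1) * β ^ 2 * A i (j - 1) ^ 2)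
        = (1 - β ^ 2) * (∑ i, ∑ j ∈ Ioc (n i (k + 1)) (n i (k + 1 + 1)), α i j * A i j ^ 2)
          + β ^ 2 * ((∑ i, α i (n i (k + 1 + 1)) * A i (n i (k + 1 + 1)) ^ 2)
              - ∑ i, α i (n i (k + 1)) * A i (n i (k + 1)) ^ 2) := by
      calc ∑ i, ∑ j ∈ Ioc (n i (k + 1)) (n i (k + 1 + 1)),
            (α i j * A i j ^ 2 - α i (j - 1) * β ^ 2 * A i (j - 1) ^ 2)
          = ∑ i, ((1 - β ^ 2) * ∑ j ∈ Ioc (n i (k + 1)) (n i (k + 1 + 1)), α i j * A i j ^ 2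
              + β ^ 2 * (α i (n i (k + 1 + 1)) * A i (n i (k + 1 + 1)) ^ 2
                - α i (n i (k + 1)) * A i (n i (k + 1)) ^ 2)) :=
            Finset.sum_congr rfl fun i _ =>
              block_identity (α i) (A i) β _ _ (hmono i (by omega))
        _ = _ := by
            rw [Finset.sum_add_distrib, ← Finset.mul_sum, ← Finset.mul_sum,
              Finset.sum_sub_distrib]
    rw [hid] at hc
    -- split the two full sums into the active part and the rest
    have hsp : ∀ (f : Fin s → ℝ), ∑ i, f i
        = (∑ i ∈ Finset.univ.filter (fun i : Fin s => n i (k + 1) < n i (k + 1 + 1)), f i)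
          + ∑ i ∈ Finset.univ.filter
              (fun i : Fin s => ¬ n i (k + 1) < n i (k + 1 + 1)), f i :=
      fun f => (Finset.sum_filter_add_sum_filter_not Finset.univ _ f).symm
    have hrest : ∑ i ∈ Finset.univ.filter
            (fun i : Fin s => ¬ n i (k + 1) < n i (k + 1 + 1)),
          α i (n i (k + 1 + 1)) * A i (n i (k + 1 + 1)) ^ 2
        = ∑ i ∈ Finset.univ.filter
            (fun i : Fin s => ¬ n i (k + 1) < n i (k + 1 + 1)),
          α i (n i (k + 1)) * A i (n i (k + 1)) ^ 2 := by
      refine Finset.sum_congr rfl fun i hi => ?_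
      have heq : n i (k + 1 + 1) = n i (k + 1) :=
        le_antisymm (not_lt.mp (Finset.mem_filter.mp hi).2) (hmono i (by omega))
      rw [heq]
    have he2 := hsp (fun i => α i (n i (k + 1 + 1)) * A i (n i (k + 1 + 1)) ^ 2)
    have he1 := hsp (fun i => α i (n i (k + 1)) * A i (n i (k + 1)) ^ 2)
    rw [he2, he1, hrest] at hc
    linarith [hc]
  obtain ⟨C, hC⟩ := abstract_bound s (β ^ 2) KK (sq_nonneg β) hβ2 hKK0
    (fun m i => α i (n i m) * A i (n i m) ^ 2)
    (fun k => ∑ i, ∑ j ∈ Ioc (n i k) (n i (k + 1)), α i j * A i j ^ 2)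
    (fun k => ∑ i, ∑ j ∈ Ioc (n i k) (n i (k + 1)), A i j)
    B
    (fun m => Finset.univ.filter (fun i : Fin s => n i m < n i (m + 1)))
    hE hPb hB hBsum hCS hstar hEV hoffk
  -- final covering argument
  intro i
  refine summable_of_sum_range_le
    (c := (∑ j ∈ Finset.Ioc 0 (n i 0), A i j) + C) (fun j => hA i _) ?_
  intro J
  have h1 : ∑ j ∈ Finset.range J, A i (j + 1) = ∑ j ∈ Finset.Ioc 0 J, A i j :=
    sum_range_shift (A i) J
  obtain ⟨M, hM⟩ := ((htends i).eventually_ge_atTop J).exists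
  have h2 : ∑ j ∈ Finset.Ioc 0 J, A i j ≤ ∑ j ∈ Finset.Ioc 0 (n i M), A i j :=
    Finset.sum_le_sum_of_subset_of_nonneg
      (Finset.Ioc_subset_Ioc_right hM) (fun j _ _ => hA i j)
  have h3 : ∑ j ∈ Finset.Ioc 0 (n i 0), A i j + ∑ j ∈ Finset.Ioc (n i 0) (n i M), A i j
      = ∑ j ∈ Finset.Ioc 0 (n i M), A i j :=
    Finset.sum_Ioc_consecutive _ (Nat.zero_le _) (hmono i (Nat.zero_le M))
  have h4 : ∑ j ∈ Finset.Ioc (n i 0) (n i M), A i j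
      = ∑ k ∈ Finset.range M, ∑ j ∈ Finset.Ioc (n i k) (n i (k + 1)), A i j :=
    sum_blocks (A i) (n i) (hmono i) M
  have h5 : ∀ k, ∑ j ∈ Finset.Ioc (n i k) (n i (k + 1)), A i j
      ≤ ∑ i', ∑ j ∈ Finset.Ioc (n i' k) (n i' (k + 1)), A i' j := by
    intro k
    exact Finset.single_le_sum
      (f := fun i' => ∑ j ∈ Finset.Ioc (n i' k) (n i' (k + 1)), A i' j)
      (fun i' _ => Finset.sum_nonneg fun j _ => hA i' j) (Finset.mem_univ i)
  have h6 : ∑ k ∈ Finset.range M, ∑ j ∈ Finset.Ioc (n i k) (n i (k + 1)), A i j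
      ≤ ∑ k ∈ Finset.range M, ∑ i', ∑ j ∈ Finset.Ioc (n i' k) (n i' (k + 1)), A i' j :=
    Finset.sum_le_sum fun k _ => h5 k
  have h7 := hC M
  rw [h1]
  calc ∑ j ∈ Finset.Ioc 0 J, A i j ≤ ∑ j ∈ Finset.Ioc 0 (n i M), A i j := h2
    _ = ∑ j ∈ Finset.Ioc 0 (n i 0), A i j + ∑ j ∈ Finset.Ioc (n i 0) (n i M), A i j := h3.symm
    _ ≤ ∑ j ∈ Finset.Ioc 0 (n i 0), A i j + C := by
        rw [h4]
        have := h6.trans h7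
        linarith
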